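/- Let f : {0,1}^n → ℕ^2 be a bi-objective function and let a ∈ ℕ be such that |f_1(x) - f_2(x)| ≤ a for every x ∈ {0,1}^n. If S ⊆ {0,1}^n is a set of pairwise incomparable solutions with respect to f, then |S| ≤ a + 1. -/
import Mathlib


theorem stmt8 (n : ℕ) (hn : 0 < n) (a : ℕ)
    (f : (Fin n → Bool) → ℕ × ℕ)
    (ha : ∀ x, |((f x).1 : ℤ) - ((f x).2 : ℤ)| ≤ (a : ℤ))
    (S : Finset (Fin n → Bool))
    (hS : ∀ x ∈ S, ∀ y ∈ S, x ≠ y →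
      ¬ ((f y).1 ≤ (f x).1 ∧ (f y).2 ≤ (f x).2) ∧
      ¬ ((f x).1 ≤ (f y).1 ∧ (f x).2 ≤ (f y).2)) :
    S.card ≤ a + 1 := by
  set d : (Fin n → Bool) → ℤ := fun x => ((f x).1 : ℤ) - ((f x).2 : ℤ) with hd
  -- key: for distinct x y in S, |d x - d y| ≥ 2
  have key : ∀ x ∈ S, ∀ y ∈ S, x ≠ y → 2 ≤ |d x - d y| := by
    intro x hx y hy hxy
    obtain ⟨h1, h2⟩ := hS x hx y hy hxy
    simp only [not_and_or, not_le] at h1 h2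
    -- f1 x ≠ f1 y
    rcases lt_trichotomy (f x).1 (f y).1 with hlt | heq | hgt
    · -- then f2 y < f2 x (else y dominates x: f1 x ≤ f1 y ∧ f2 x ≤ f2 y contradicts h2)
      have h2y : (f y).2 < (f x).2 := by
        rcases h2 with h | h
        · omega
        · exact h
      have : d y - d x ≥ 2 := by
        simp only [hd]
        have : ((f x).1 : ℤ) + 1 ≤ (f y).1 := by exact_mod_cast hlt
        have : ((f y).2 : ℤ) + 1 ≤ (f x).2 := by exact_mod_cast h2y
        omega
      rw [abs_sub_comm]
      exact le_abs.mpr (Or.inl (by omega))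
    · exfalso
      rcases h1 with h | h
      · omega
      · rcases h2 with h' | h'
        · omega
        · omega
    · have h1y : (f x).2 < (f y).2 := by
        rcases h1 with h | h
        · omega
        · exact h
      have : d x - d y ≥ 2 := by
        simp only [hd]
        have : ((f y).1 : ℤ) + 1 ≤ (f x).1 := by exact_mod_cast hgt
        have : ((f x).2 : ℤ) + 1 ≤ (f y).2 := by exact_mod_cast h1y
        omega
      exact le_abs.mpr (Or.inl (by omega))
  have hbound : ∀ x, 0 ≤ d x + a ∧ d x + a ≤ 2 * a := by
    intro x
    have := ha x
    rw [abs_le] at this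
    constructor <;> simp only [hd] <;> omega
  -- inject S into range (a+1) via x ↦ (d x + a).toNat / 2
  have := Finset.card_le_card_of_injOn (fun x => (d x + a).toNat / 2)
    (fun x hx => by
      show (d x + (a:ℤ)).toNat / 2 ∈ Finset.range (a + 1)
      simp only [Finset.mem_range]
      have := (hbound x).2
      have := (hbound x).1
      omega)
    (fun x hx y hy hxy => by
      by_contra hne
      have hxy' : (d x + (a:ℤ)).toNat / 2 = (d y + (a:ℤ)).toNat / 2 := hxy
      have h2 := key x hx y hy hne
      have hx0 := (hbound x).1
      have hy0 := (hbound y).1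
      rcases le_abs.mp h2 with h | h <;> omega)
  simpa using this
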